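/- Let E ∈ ℝ^{IJ×R} have full column rank R, let {u₁, …, u_{IJ−R}} be a basis of N(E^⊤), and set Uᵢ = vec⁻¹(uᵢ) ∈ ℝ^{I×J}. Suppose the system of equations x^⊤ Uᵢ y = 0 (i = 1, …, IJ−R) has R real solutions (x_r, y_r), r = 1, …, R, such that the Khatri–Rao product Y ⊙ X of X = [x₁, …, x_R] and Y = [y₁, …, y_R] has full column rank R. Then there exist matrices X̃ ∈ ℝ^{I×R} and Ỹ ∈ ℝ^{J×R}, each of whose columns has Euclidean norm 1, and an invertible matrix W̃ ∈ ℝ^{R×R}, such that Ỹ ⊙ X̃ = E W̃. -/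

import Mathlib

open Matrix

/-- Corollary 3.2: let `E ∈ ℝ^{IJ×R}` have full column rank `R`, let
`{u₁, …, u_{IJ-R}}` be a basis of `N(Eᵀ)` and `Uᵢ = vec⁻¹(uᵢ)`.  If the system
`xᵀ Uᵢ y = 0` (for all `i`) has `R` real solutions `(x_r, y_r)` such that the
Khatri–Rao product `Y ⊙ X` (with row `(j, i)`, column `r` entry `y_r(j) * x_r(i)`)
has full column rank `R`, then there exist `X̃ ∈ ℝ^{I×R}`, `Ỹ ∈ ℝ^{J×R}` with unit
Euclidean-norm columns and an invertible `W̃ ∈ ℝ^{R×R}` with `Ỹ ⊙ X̃ = E W̃`. -/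
theorem inverse_problem_solvable (I J R : ℕ)
    (E : Matrix (Fin J × Fin I) (Fin R) ℝ) (hE : E.rank = R)
    (u : Fin (I * J - R) → (Fin J × Fin I → ℝ))
    (hindep : LinearIndependent ℝ u)
    (hspan : Submodule.span ℝ (Set.range u) = LinearMap.ker (Matrix.mulVecLin Eᵀ))
    (U : Fin (I * J - R) → Matrix (Fin I) (Fin J) ℝ)
    (hU : ∀ k i j, U k i j = u k (j, i))
    (x : Fin R → Fin I → ℝ) (y : Fin R → Fin J → ℝ)
    (hsol : ∀ r k, (x r) ⬝ᵥ (U k).mulVec (y r) = 0)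
    (hkr : (Matrix.of fun (p : Fin J × Fin I) r => y r p.1 * x r p.2).rank = R) :
    ∃ (Xt : Matrix (Fin I) (Fin R) ℝ) (Yt : Matrix (Fin J) (Fin R) ℝ)
      (W : Matrix (Fin R) (Fin R) ℝ),
      (∀ r, ∑ i, (Xt i r) ^ 2 = 1) ∧ (∀ r, ∑ j, (Yt j r) ^ 2 = 1) ∧ IsUnit W ∧
        (Matrix.of fun (p : Fin J × Fin I) r => Yt p.1 r * Xt p.2 r) = E * W := by
  classical
  set m : Fin R → (Fin J × Fin I → ℝ) := fun r p => y r p.1 * x r p.2 with hm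
  set M : Matrix (Fin J × Fin I) (Fin R) ℝ := Matrix.of fun p r => m r p with hMdef
  -- Step A: each m r is orthogonal to each u k
  have stepA : ∀ r k, u k ⬝ᵥ m r = 0 := by
    intro r k
    have h := hsol r k
    calc u k ⬝ᵥ m r = ∑ j, ∑ i, u k (j, i) * (y r j * x r i) := by
          rw [dotProduct, Fintype.sum_prod_type]
      _ = ∑ i, ∑ j, u k (j, i) * (y r j * x r i) := Finset.sum_comm
      _ = ∑ i, x r i * ∑ j, U k i j * y r j := by
          refine Finset.sum_congr rfl fun i _ => ?_
          rw [Finset.mul_sum]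
          refine Finset.sum_congr rfl fun j _ => ?_
          rw [hU]; ring
      _ = 0 := h
  -- Step B: m r is orthogonal to the whole kernel of Eᵀ
  have stepB : ∀ (r : Fin R), ∀ w ∈ LinearMap.ker (Matrix.mulVecLin Eᵀ),
      w ⬝ᵥ m r = 0 := by
    intro r w hw
    rw [← hspan] at hw
    induction hw using Submodule.span_induction with
    | mem v hv => obtain ⟨k, rfl⟩ := hv; exact stepA r k
    | zero => simp
    | add a b _ _ ha hb => rw [add_dotProduct, ha, hb, add_zero]
    | smul c a _ ha => rw [smul_dotProduct, ha, smul_zero]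
  -- Euclidean space setting
  set K : Submodule ℝ (EuclideanSpace ℝ (Fin J × Fin I)) :=
    LinearMap.ker ((Matrix.mulVecLin Eᵀ).comp
      (WithLp.linearEquiv 2 ℝ (Fin J × Fin I → ℝ)).toLinearMap) with hKdef
  set Rg : Submodule ℝ (EuclideanSpace ℝ (Fin J × Fin I)) :=
    LinearMap.range ((WithLp.linearEquiv 2 ℝ (Fin J × Fin I → ℝ)).symm.toLinearMap.comp
      (Matrix.mulVecLin E)) with hRgdef
  have hinner : ∀ (w v : EuclideanSpace ℝ (Fin J × Fin I)),
      (inner ℝ w v : ℝ) = ∑ p, w p * v p := by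
    intro w v
    simp [PiLp.inner_apply, RCLike.inner_apply, mul_comm]
  have hle : Rg ≤ Kᗮ := by
    rintro v ⟨c, rfl⟩
    rw [Submodule.mem_orthogonal]
    intro w hw
    have hw0 : Eᵀ.mulVec w = 0 := hw
    rw [hinner]
    calc ∑ p, w p * (Matrix.mulVecLin E c) p
        = ∑ p, ∑ s, w p * (E p s * c s) := by
          simp [mulVecLin_apply, mulVec, dotProduct, Finset.mul_sum]
      _ = ∑ s, (∑ p, Eᵀ s p * w p) * c s := by
          rw [Finset.sum_comm]
          exact Finset.sum_congr rfl fun s _ => by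
            rw [Finset.sum_mul]
            exact Finset.sum_congr rfl fun p _ => by rw [transpose_apply]; ring
      _ = (Eᵀ.mulVec w) ⬝ᵥ c := by simp [mulVec, dotProduct]
      _ = 0 := by rw [hw0, zero_dotProduct]
  have hRle : R ≤ J * I := by
    have := E.rank_le_card_height
    rw [hE] at this
    simpa [Fintype.card_prod] using this
  have hfinK : Module.finrank ℝ K = J * I - R := by
    have h := LinearMap.finrank_range_add_finrank_ker ((Matrix.mulVecLin Eᵀ).comp
      (WithLp.linearEquiv 2 ℝ (Fin J × Fin I → ℝ)).toLinearMap)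
    rw [LinearMap.range_comp_of_range_eq_top _ (LinearEquiv.range _)] at h
    have h2 : Eᵀ.rank = R := by rw [Matrix.rank_transpose, hE]
    rw [Matrix.rank] at h2
    rw [h2] at h
    have h3 : Module.finrank ℝ (EuclideanSpace ℝ (Fin J × Fin I)) = J * I := by
      simp [finrank_euclideanSpace, Fintype.card_prod, Nat.mul_comm]
    rw [h3] at h
    have h6 : Module.finrank ℝ K =
        Module.finrank ℝ (LinearMap.ker ((Matrix.mulVecLin Eᵀ).comp
      (WithLp.linearEquiv 2 ℝ (Fin J × Fin I → ℝ)).toLinearMap)) := rfl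
    rw [h6]
    omega
  have hfinKperp : Module.finrank ℝ Kᗮ = R := by
    have h2 : Module.finrank ℝ K + Module.finrank ℝ Kᗮ =
        Module.finrank ℝ (EuclideanSpace ℝ (Fin J × Fin I)) :=
      Submodule.finrank_add_finrank_orthogonal K
    rw [hfinK, finrank_euclideanSpace, Fintype.card_prod, Fintype.card_fin, Fintype.card_fin]
      at h2
    omega
  have hfinRg : Module.finrank ℝ Rg = R := by
    rw [hRgdef, LinearMap.range_comp, LinearEquiv.finrank_map_eq]; exact hE
  have hRgK : Rg = Kᗮ := Submodule.eq_of_le_of_finrank_eq hle (by rw [hfinRg, hfinKperp])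
  -- each m r is in the range of E
  have hmem : ∀ r, (WithLp.toLp 2 (m r) : EuclideanSpace ℝ (Fin J × Fin I)) ∈ Rg := by
    intro r
    rw [hRgK, Submodule.mem_orthogonal]
    intro w hw
    rw [hinner]
    simpa [dotProduct] using stepB r (WithLp.ofLp w) hw
  choose c hc using hmem
  -- M = E * W0
  set W0 : Matrix (Fin R) (Fin R) ℝ := Matrix.of fun s r => c r s with hW0def
  have hMW0 : M = E * W0 := by
    ext p r
    have h := congrArg (fun v : EuclideanSpace ℝ (Fin J × Fin I) => WithLp.ofLp v p) (hc r)
    simp only [mulVecLin_apply, mulVec, dotProduct] at h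
    simp only [hMdef, Matrix.mul_apply, Matrix.of_apply, hW0def]
    rw [← h]
    rfl
  -- kernel of M is trivial
  have hkerM : LinearMap.ker M.mulVecLin = ⊥ := by
    have h4 := LinearMap.finrank_range_add_finrank_ker M.mulVecLin
    have h5 : Module.finrank ℝ (LinearMap.range M.mulVecLin) = R := hkr
    rw [h5, Module.finrank_pi, Fintype.card_fin] at h4
    have : Module.finrank ℝ (LinearMap.ker M.mulVecLin) = 0 := by omega
    exact Submodule.finrank_eq_zero.mp this
  have hkerM' : ∀ v : Fin R → ℝ, M.mulVec v = 0 → v = 0 := by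
    intro v hv
    have : v ∈ LinearMap.ker M.mulVecLin := LinearMap.mem_ker.mpr hv
    rw [hkerM] at this
    simpa using this
  -- columns of M are nonzero
  have hcolnz : ∀ r, m r ≠ 0 := by
    intro r hr
    have h1 : M.mulVec (Pi.single r 1) = 0 := by
      rw [Matrix.mulVec_single_one]
      ext p
      show m r p = 0
      rw [hr]; rfl
    have h2 := hkerM' _ h1
    have := congrFun h2 r
    simp at this
  -- x r and y r are nonzero
  have hxy : ∀ r, (∃ i, x r i ≠ 0) ∧ (∃ j, y r j ≠ 0) := by
    intro r
    obtain ⟨p, hp⟩ := Function.ne_iff.mp (hcolnz r)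
    simp only [hm, Pi.zero_apply] at hp
    exact ⟨⟨p.2, fun h => hp (by rw [h, mul_zero])⟩, ⟨p.1, fun h => hp (by rw [h, zero_mul])⟩⟩
  set Sx : Fin R → ℝ := fun r => ∑ i, (x r i) ^ 2 with hSx
  set Sy : Fin R → ℝ := fun r => ∑ j, (y r j) ^ 2 with hSy
  have hSxpos : ∀ r, 0 < Sx r := by
    intro r
    obtain ⟨⟨i, hi⟩, _⟩ := hxy r
    exact Finset.sum_pos' (fun i _ => sq_nonneg _) ⟨i, Finset.mem_univ i, by positivity⟩
  have hSypos : ∀ r, 0 < Sy r := by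
    intro r
    obtain ⟨_, ⟨j, hj⟩⟩ := hxy r
    exact Finset.sum_pos' (fun j _ => sq_nonneg _) ⟨j, Finset.mem_univ j, by positivity⟩
  set nx : Fin R → ℝ := fun r => Real.sqrt (Sx r) with hnx
  set ny : Fin R → ℝ := fun r => Real.sqrt (Sy r) with hny
  have hnxpos : ∀ r, 0 < nx r := fun r => Real.sqrt_pos.mpr (hSxpos r)
  have hnypos : ∀ r, 0 < ny r := fun r => Real.sqrt_pos.mpr (hSypos r)
  have hnxsq : ∀ r, nx r ^ 2 = Sx r := fun r => Real.sq_sqrt (hSxpos r).le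
  have hnysq : ∀ r, ny r ^ 2 = Sy r := fun r => Real.sq_sqrt (hSypos r).le
  refine ⟨Matrix.of fun i r => x r i / nx r, Matrix.of fun j r => y r j / ny r,
    W0 * Matrix.diagonal (fun r => (nx r * ny r)⁻¹), ?_, ?_, ?_, ?_⟩
  · intro r
    simp only [Matrix.of_apply, div_pow, ← Finset.sum_div]
    rw [hnxsq]
    exact div_self (hSxpos r).ne'
  · intro r
    simp only [Matrix.of_apply, div_pow, ← Finset.sum_div]
    rw [hnysq]
    exact div_self (hSypos r).ne'
  · have hW0unit : IsUnit W0 := by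
      rw [Matrix.isUnit_iff_isUnit_det, isUnit_iff_ne_zero]
      intro hdet
      obtain ⟨v, hvne, hveq⟩ := (Matrix.exists_mulVec_eq_zero_iff).mpr hdet
      refine hvne (hkerM' v ?_)
      rw [hMW0, ← Matrix.mulVec_mulVec, hveq, Matrix.mulVec_zero]
    refine hW0unit.mul ?_
    rw [Matrix.isUnit_iff_isUnit_det, Matrix.det_diagonal, isUnit_iff_ne_zero]
    exact Finset.prod_ne_zero_iff.mpr fun r _ =>
      inv_ne_zero (mul_ne_zero (hnxpos r).ne' (hnypos r).ne')
  · rw [← Matrix.mul_assoc, ← hMW0]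
    ext p r
    have hx0 : nx r ≠ 0 := (hnxpos r).ne'
    have hy0 : ny r ≠ 0 := (hnypos r).ne'
    simp only [Matrix.of_apply, Matrix.mul_diagonal, hMdef, hm]
    rw [div_mul_div_comm, mul_comm (ny r) (nx r), div_eq_mul_inv]
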